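/- Assume in addition condition (star): for every arrow α, n_α ≥ 4 or n_{f(α)} ≥ 4. Then for every arrow α, setting α' = g^{n_ᾱ−3}(ᾱ), q = c(f(α))·x(g²(f(α)))·x(g³(f(α)))⋯x(g^{n_{f(α)}−2}(f(α))) (a scalar multiple of a product of n_{f(α)}−3 factors, equal to c(f(α))·1 if n_{f(α)} = 3) and q' = c(ᾱ)·x(ᾱ)·x(g(ᾱ))⋯x(g^{n_ᾱ−4}(ᾱ)) (a scalar multiple of a product of n_ᾱ−3 factors, equal to c(ᾱ)·1 if n_ᾱ = 3), one has x(α)·x(g(α))·x(f(g(α))) = x(α)·x(f(α))·x(g(f(α)))·q and x(α)·x(f(α))·x(g(f(α))) = q'·x(α')·x(g(α'))·x(f(g(α'))), where the two products appearing in q and q' are not both of length zero, i.e. (n_ᾱ−3) + (n_{f(α)}−3) ≥ 1. -/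
import Mathlib

def gpath {Q₁ A : Type} [Ring A] (x : Q₁ → A) (g : Q₁ → Q₁) (α : Q₁) (m : ℕ) : A :=
  ((List.range m).map fun i => x (g^[i] α)).prod

lemma gpath_succ {Q₁ A : Type} [Ring A] (x : Q₁ → A) (g : Q₁ → Q₁) (α : Q₁) (m : ℕ) :
    gpath x g α (m+1) = gpath x g α m * x (g^[m] α) := by
  simp [gpath, List.range_succ]

lemma gpath_cons {Q₁ A : Type} [Ring A] (x : Q₁ → A) (g : Q₁ → Q₁) (α : Q₁) (m : ℕ) :
    gpath x g α (m+1) = x α * gpath x g (g α) m := by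
  simp only [gpath, List.range_succ_eq_map, List.map_cons, List.map_map, List.prod_cons,
    Function.iterate_zero_apply]
  have : ((fun i => x (g^[i] α)) ∘ Nat.succ) = fun i => x (g^[i] (g α)) := by
    funext i
    simp [Function.comp, Function.iterate_succ_apply]
  rw [this]

theorem stmt_14
  {Q₀ Q₁ : Type} [Fintype Q₀] [Fintype Q₁] [DecidableEq Q₀] [DecidableEq Q₁]
  [Nonempty Q₀] [Nonempty Q₁]
  (s t : Q₁ → Q₀)
  (hconn : ∀ u v : Q₀, Relation.EqvGen (fun a b => ∃ e : Q₁, s e = a ∧ t e = b) u v)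
  (hnoloop : ∀ e : Q₁, s e ≠ t e)
  (hno2cyc : ∀ e e' : Q₁, ¬ (s e = t e' ∧ t e = s e'))
  (hout : ∀ v : Q₀, (Finset.univ.filter fun e => s e = v).card = 2)
  (hin : ∀ v : Q₀, (Finset.univ.filter fun e => t e = v).card = 2)
  (f g : Q₁ ≃ Q₁)
  (hfg : ∀ α : Q₁, f α ≠ g α)
  (hsf : ∀ α : Q₁, s (f α) = t α)
  (hsg : ∀ α : Q₁, s (g α) = t α)
  (hf3 : ∀ α : Q₁, f (f (f α)) = α)
  (bar : Q₁ → Q₁)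
  (hbar_ne : ∀ α : Q₁, bar α ≠ α)
  (hbar_s : ∀ α : Q₁, s (bar α) = s α)
  {K : Type} [Field K] {A : Type} [Ring A] [Algebra K A]
  (c : Q₁ → K) (hc0 : ∀ α : Q₁, c α ≠ 0) (hcg : ∀ α : Q₁, c (g α) = c α)
  (x : Q₁ → A)
  (hrel : ∀ α : Q₁, x (f α) * x (f (f α)) =
      c α • gpath x (⇑g) (g α) (Function.minimalPeriod (⇑g) α - 1))
  (hstar : ∀ α : Q₁, 4 ≤ Function.minimalPeriod (⇑g) α ∨ 4 ≤ Function.minimalPeriod (⇑g) (f α)) :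
    ∀ α : Q₁,
      x α * x (g α) * x (f (g α)) =
        x α * x (f α) * x (g (f α)) *
          (c (f α) • gpath x (⇑g) ((⇑g)^[2] (f α)) (Function.minimalPeriod (⇑g) (f α) - 3)) ∧
      x α * x (f α) * x (g (f α)) =
        (c (bar α) • gpath x (⇑g) (bar α) (Function.minimalPeriod (⇑g) (bar α) - 3)) *
          (x ((⇑g)^[Function.minimalPeriod (⇑g) (bar α) - 3] (bar α)) *
           x (g ((⇑g)^[Function.minimalPeriod (⇑g) (bar α) - 3] (bar α))) *
           x (f (g ((⇑g)^[Function.minimalPeriod (⇑g) (bar α) - 3] (bar α))))) ∧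
      1 ≤ (Function.minimalPeriod (⇑g) (bar α) - 3) + (Function.minimalPeriod (⇑g) (f α) - 3) := by
  -- every point is periodic under g
  have hper : ∀ δ : Q₁, δ ∈ Function.periodicPts ⇑g := by
    intro δ
    refine Function.mk_mem_periodicPts (n := orderOf (g : Equiv.Perm Q₁)) (orderOf_pos _) ?_
    show g^[orderOf (g : Equiv.Perm Q₁)] δ = δ
    rw [Equiv.Perm.iterate_eq_pow, pow_orderOf_eq_one]
    rfl
  have hit : ∀ δ : Q₁, g^[Function.minimalPeriod ⇑g δ] δ = δ :=
    fun δ => Function.iterate_minimalPeriod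
  have hnit : ∀ (δ : Q₁) (k : ℕ),
      Function.minimalPeriod ⇑g (g^[k] δ) = Function.minimalPeriod ⇑g δ :=
    fun δ k => Function.minimalPeriod_apply_iterate (hper δ) k
  have hck : ∀ (δ : Q₁) (k : ℕ), c (g^[k] δ) = c δ := by
    intro δ k
    induction k with
    | zero => rfl
    | succ k ih => rw [Function.iterate_succ_apply', hcg, ih]
  -- minimal period is at least 3
  have hn3 : ∀ δ : Q₁, 3 ≤ Function.minimalPeriod ⇑g δ := by
    intro δ
    have h1 : 0 < Function.minimalPeriod ⇑g δ :=
      Function.minimalPeriod_pos_of_mem_periodicPts (hper δ)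
    by_contra h
    push_neg at h
    interval_cases hp : Function.minimalPeriod ⇑g δ
    · -- period 1 : loop
      have := hit δ
      rw [hp] at this
      simp only [Function.iterate_one] at this
      exact hnoloop δ (by rw [← hsg δ, this])
    · -- period 2 : 2-cycle
      have h2 := hit δ
      rw [hp] at h2
      have h2' : g (g δ) = δ := by
        have h3 : (⇑g)^[2] δ = g (g δ) := by
          rw [Function.iterate_succ_apply', Function.iterate_succ_apply',
            Function.iterate_zero_apply]
        rw [← h3]; exact h2
      exact hno2cyc δ (g δ) ⟨by rw [← hsg (g δ), h2'], (hsg δ).symm⟩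
  -- the other arrow with the same source
  have two_src : ∀ δ e : Q₁, s e = s δ → e ≠ δ → e = bar δ := by
    intro δ e h1 h2
    have hsub : ({δ, bar δ} : Finset Q₁) ⊆ Finset.univ.filter (fun e => s e = s δ) := by
      intro a ha
      simp only [Finset.mem_insert, Finset.mem_singleton] at ha
      simp only [Finset.mem_filter, Finset.mem_univ, true_and]
      rcases ha with rfl | rfl
      · rfl
      · exact hbar_s δ
    have hcard : ({δ, bar δ} : Finset Q₁).card = 2 := by
      rw [Finset.card_insert_of_notMem (by simp [Ne.symm (hbar_ne δ)])]
      simp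
    have heq : Finset.univ.filter (fun e => s e = s δ) = {δ, bar δ} :=
      (Finset.eq_of_subset_of_card_le hsub (by rw [hout, hcard])).symm
    have he : e ∈ ({δ, bar δ} : Finset Q₁) := by
      rw [← heq]; simp [h1]
    simp only [Finset.mem_insert, Finset.mem_singleton] at he
    tauto
  have hgbar : ∀ δ : Q₁, g δ = bar (f δ) :=
    fun δ => two_src (f δ) (g δ) (by rw [hsg, hsf]) (fun h => hfg δ h.symm)
  have hbar_eq : ∀ δ : Q₁, bar δ = g (f (f δ)) := by
    intro δ
    have h := hgbar (f (f δ))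
    rw [hf3] at h
    exact h.symm
  have hbarbar : ∀ δ : Q₁, bar (bar δ) = δ :=
    fun δ => (two_src (bar δ) δ (hbar_s δ).symm (fun h => hbar_ne δ h.symm)).symm
  have hinv : ∀ δ : Q₁, g (f (f (g (f (f δ))))) = δ := by
    intro δ
    rw [← hbar_eq δ, ← hbar_eq (bar δ), hbarbar]
  intro α
  -- abbreviations via obtain
  obtain ⟨m, hm⟩ : ∃ m', Function.minimalPeriod ⇑g (f α) = m' := ⟨_, rfl⟩
  obtain ⟨nb, hnb⟩ : ∃ nb', Function.minimalPeriod ⇑g (bar α) = nb' := ⟨_, rfl⟩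
  have hm3 : 3 ≤ m := hm ▸ hn3 (f α)
  have hnb3 : 3 ≤ nb := hnb ▸ hn3 (bar α)
  rw [hm, hnb]
  -- period of f (f α) equals nb
  have hpβ : Function.minimalPeriod ⇑g (f (f α)) = nb := by
    rw [← hnb, hbar_eq α]
    exact (Function.minimalPeriod_apply (hper (f (f α)))).symm
  refine ⟨?_, ?_, ?_⟩
  · -- Part 1
    have hgγ : g (g^[m-1] (f α)) = f α := by
      calc g ((⇑g)^[m-1] (f α)) = (⇑g)^[m-1+1] (f α) := (Function.iterate_succ_apply' _ _ _).symm
        _ = f α := by rw [show m - 1 + 1 = m from by omega, ← hm]; exact hit (f α)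
    have hγ : g^[m-1] (f α) = f (f (g α)) := by
      apply g.injective
      rw [hgγ]
      have h := hinv (f α)
      rw [hf3 α] at h
      exact h.symm
    have key1 : x (g α) * x (f (g α)) = c (f α) • gpath x ⇑g (f α) (m - 1) := by
      have h := hrel (g^[m-1] (f α))
      rw [hnit (f α) (m-1), hm, hck (f α) (m-1), hgγ, hγ, hf3 (g α)] at h
      exact h
    have hsplit : gpath x ⇑g (f α) (m - 1) =
        x (f α) * (x (g (f α)) * gpath x ⇑g ((⇑g)^[2] (f α)) (m - 3)) := by
      rw [show m - 1 = (m - 3) + 1 + 1 from by omega, gpath_cons, gpath_cons]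
      have : g (g (f α)) = (⇑g)^[2] (f α) := by
        simp [Function.iterate_succ_apply]
      rw [this]
    calc x α * x (g α) * x (f (g α)) = x α * (x (g α) * x (f (g α))) := by rw [mul_assoc]
      _ = x α * (c (f α) • (x (f α) * (x (g (f α)) * gpath x ⇑g ((⇑g)^[2] (f α)) (m - 3)))) := by
          rw [key1, hsplit]
      _ = x α * x (f α) * x (g (f α)) * (c (f α) • gpath x ⇑g ((⇑g)^[2] (f α)) (m - 3)) := by
          simp only [mul_smul_comm, smul_mul_assoc, mul_assoc]
  · -- Part 2
    have key2 : x α * x (f α) = c (bar α) • gpath x ⇑g (bar α) (nb - 1) := by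
      have h := hrel (f (f α))
      rw [hpβ, hf3 α, ← hbar_eq α] at h
      rw [show c (f (f α)) = c (bar α) from by rw [hbar_eq α, hcg]] at h
      exact h
    have hsplit2 : gpath x ⇑g (bar α) (nb - 1) =
        gpath x ⇑g (bar α) (nb - 3) * x ((⇑g)^[nb-3] (bar α)) * x ((⇑g)^[nb-2] (bar α)) := by
      rw [show nb - 1 = (nb - 3) + 1 + 1 from by omega, gpath_succ, gpath_succ,
        show nb - 3 + 1 = nb - 2 from by omega]
    have hrew : g ((⇑g)^[nb-3] (bar α)) = (⇑g)^[nb-2] (bar α) := by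
      calc g ((⇑g)^[nb-3] (bar α)) = (⇑g)^[nb-3+1] (bar α) :=
            (Function.iterate_succ_apply' _ _ _).symm
        _ = (⇑g)^[nb-2] (bar α) := by rw [show nb - 3 + 1 = nb - 2 from by omega]
    have hgα'' : g ((⇑g)^[nb-2] (bar α)) = f (f α) := by
      apply g.injective
      have h1 : g (g ((⇑g)^[nb-2] (bar α))) = bar α := by
        calc g (g ((⇑g)^[nb-2] (bar α))) = (⇑g)^[nb-2+1+1] (bar α) := by
              rw [Function.iterate_succ_apply', Function.iterate_succ_apply']
          _ = bar α := by
              rw [show nb - 2 + 1 + 1 = nb from by omega, ← hnb]; exact hit _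
      rw [h1, hbar_eq α]
    have hfα'' : f ((⇑g)^[nb-2] (bar α)) = g (f α) := by
      have h := hinv (f ((⇑g)^[nb-2] (bar α)))
      rw [hf3 ((⇑g)^[nb-2] (bar α)), hgα'', hf3 (f α)] at h
      exact h.symm
    rw [hrew, hfα'']
    calc x α * x (f α) * x (g (f α))
        = (c (bar α) • (gpath x ⇑g (bar α) (nb - 3) * x ((⇑g)^[nb-3] (bar α)) *
            x ((⇑g)^[nb-2] (bar α)))) * x (g (f α)) := by rw [key2, hsplit2]
      _ = (c (bar α) • gpath x ⇑g (bar α) (nb - 3)) *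
            (x ((⇑g)^[nb-3] (bar α)) * x ((⇑g)^[nb-2] (bar α)) * x (g (f α))) := by
          simp only [smul_mul_assoc, mul_assoc]
  · -- Part 3
    rcases hstar (f α) with h | h
    · rw [hm] at h; omega
    · rw [hpβ] at h; omega
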